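/- arXiv:1105.1567 — 3 statements merged into one kernel-verified Lean document; each statement's English description precedes it below -/
import Mathlib

section
/- The Kronecker product G₁ × G₂ of two connected nontrivial graphs is connected if and only if G₁ or G₂ contains an odd cycle. -/
open SimpleGraph

/-- The Kronecker (tensor) product of two simple graphs. -/
def tensorProd {α β : Type*} (G : SimpleGraph α) (H : SimpleGraph β) : SimpleGraph (α × β) where
  Adj p q := G.Adj p.1 q.1 ∧ H.Adj p.2 q.2
  symm := ⟨fun p q h => ⟨G.adj_symm h.1, H.adj_symm h.2⟩⟩
  loopless := ⟨fun p h => G.loopless.irrefl p.1 h.1⟩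

instance {α β : Type*} (G : SimpleGraph α) (H : SimpleGraph β)
    [DecidableRel G.Adj] [DecidableRel H.Adj] : DecidableRel (tensorProd G H).Adj :=
  fun _ _ => instDecidableAnd

/-- `S` is a separating set of `G`: deleting `S` leaves a single vertex or a
disconnected (possibly empty) graph. -/
def IsSeparating {V : Type*} (G : SimpleGraph V) (S : Set V) : Prop :=
  Sᶜ.ncard = 1 ∨ ¬ (G.induce Sᶜ).Connected

/-- The vertex connectivity `κ(G)`: the minimum cardinality of a separating set. -/
noncomputable def kappa {V : Type*} [Fintype V] (G : SimpleGraph V) : ℕ :=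
  sInf {k | ∃ S : Set V, IsSeparating G S ∧ S.ncard = k}

/-- A graph is super-connected (super-κ) if every minimum separating set is the
neighborhood of some vertex. -/
def SuperK {V : Type*} [Fintype V] (G : SimpleGraph V) : Prop :=
  ∀ S : Set V, IsSeparating G S → S.ncard = kappa G → ∃ v, S = G.neighborSet v

section Aux

variable {α β : Type*} {G : SimpleGraph α} {H : SimpleGraph β}

lemma reach_of_walks {a a' : α} {b b' : β} (w₁ : G.Walk a a') (w₂ : H.Walk b b')
    (h : w₁.length = w₂.length) : (tensorProd G H).Reachable (a, b) (a', b') := by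
  induction w₁ generalizing b with
  | nil =>
    have hb : b = b' := Walk.eq_of_length_eq_zero (by simpa using h.symm)
    subst hb
    exact Reachable.refl _
  | @cons u v w hadj p ih =>
    cases w₂ with
    | nil => simp at h
    | @cons _ c _ hadj' q =>
      exact (Adj.reachable (show (tensorProd G H).Adj (u, b) (v, c) from ⟨hadj, hadj'⟩)).trans
        (ih q (by simpa using h))

lemma exists_neighbor (hc : G.Connected) (he : G.edgeSet.Nonempty) (a : α) :
    ∃ c, G.Adj a c := by
  obtain ⟨e, he⟩ := he
  induction e with
  | _ u v =>
    rw [mem_edgeSet] at he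
    obtain ⟨w⟩ := hc a u
    cases w with
    | nil => exact ⟨v, he⟩
    | cons h _ => exact ⟨_, h⟩

lemma exists_walk_add_two {a a' c : α} (w : G.Walk a a') (h : G.Adj a' c) (k : ℕ) :
    ∃ w' : G.Walk a a', w'.length = w.length + 2 * k := by
  induction k with
  | zero => exact ⟨w, by omega⟩
  | succ n ih =>
    obtain ⟨w', hw'⟩ := ih
    refine ⟨w'.append (Walk.cons h (Walk.cons h.symm Walk.nil)), ?_⟩
    simp [Walk.length_append, hw']
    omega

lemma reach_of_parity {a a' : α} {b b' : β} (w₁ : G.Walk a a') (w₂ : H.Walk b b')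
    {c : α} {d : β} (hc : G.Adj a' c) (hd : H.Adj b' d)
    (hp : w₁.length % 2 = w₂.length % 2) :
    (tensorProd G H).Reachable (a, b) (a', b') := by
  rcases le_total w₁.length w₂.length with h | h
  · obtain ⟨w', hw'⟩ := exists_walk_add_two w₁ hc ((w₂.length - w₁.length) / 2)
    exact reach_of_walks w' w₂ (by omega)
  · obtain ⟨w', hw'⟩ := exists_walk_add_two w₂ hd ((w₁.length - w₂.length) / 2)
    exact reach_of_walks w₁ w' (by omega)

/-- A non-2-colorable connected graph has an odd closed walk. -/
lemma exists_odd_closed_walk (hc : G.Connected) (hn : ¬ G.Colorable 2) :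
    ∃ (u : α) (w : G.Walk u u), Odd w.length := by
  by_contra hno
  push_neg at hno
  have hne : Nonempty α := hc.nonempty
  obtain ⟨r⟩ := hne
  apply hn
  refine ⟨Coloring.mk (fun a => ⟨G.dist r a % 2, by omega⟩) ?_⟩
  intro x y hxy hcol
  have hmod : G.dist r x % 2 = G.dist r y % 2 := congrArg Fin.val hcol
  obtain ⟨p, hp⟩ := (hc r x).exists_walk_length_eq_dist
  obtain ⟨q, hq⟩ := (hc r y).exists_walk_length_eq_dist
  have := hno r (p.append ((Walk.cons hxy Walk.nil).append q.reverse))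
  simp [Walk.length_append, hp, hq, Nat.odd_iff] at this
  omega

lemma tensor_connected (hc₁ : G.Connected) (hc₂ : H.Connected)
    (he₁ : G.edgeSet.Nonempty) (he₂ : H.edgeSet.Nonempty)
    (hodd : (∃ (u : α) (w : G.Walk u u), Odd w.length) ∨
            (∃ (v : β) (w : H.Walk v v), Odd w.length)) :
    (tensorProd G H).Connected := by
  have hα : Nonempty α := hc₁.nonempty
  have hβ : Nonempty β := hc₂.nonempty
  rw [connected_iff]
  refine ⟨?_, inferInstance⟩
  rintro ⟨a, b⟩ ⟨a', b'⟩
  obtain ⟨w₁⟩ := hc₁ a a'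
  obtain ⟨w₂⟩ := hc₂ b b'
  obtain ⟨c, hcadj⟩ := exists_neighbor hc₁ he₁ a'
  obtain ⟨d, hdadj⟩ := exists_neighbor hc₂ he₂ b'
  by_cases hp : w₁.length % 2 = w₂.length % 2
  · exact reach_of_parity w₁ w₂ hcadj hdadj hp
  · rcases hodd with ⟨u, wo, hwo⟩ | ⟨v, wo, hwo⟩
    · obtain ⟨t⟩ := hc₁ a' u
      refine reach_of_parity (w₁.append (t.append (wo.append t.reverse))) w₂ hcadj hdadj ?_
      rw [Nat.odd_iff] at hwo
      simp [Walk.length_append]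
      omega
    · obtain ⟨t⟩ := hc₂ b' v
      refine reach_of_parity w₁ (w₂.append (t.append (wo.append t.reverse))) hcadj hdadj ?_
      rw [Nat.odd_iff] at hwo
      simp [Walk.length_append]
      omega

end Aux

theorem stmt6 {α β : Type*} [Fintype α] [Fintype β]
    (G₁ : SimpleGraph α) (G₂ : SimpleGraph β)
    (h₁ : G₁.Connected) (h₂ : G₂.Connected)
    (he₁ : G₁.edgeSet.Nonempty) (he₂ : G₂.edgeSet.Nonempty) :
    (tensorProd G₁ G₂).Connected ↔ (¬ G₁.Colorable 2 ∨ ¬ G₂.Colorable 2) := by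
  constructor
  · intro hconn
    by_contra hcol
    push_neg at hcol
    obtain ⟨hc1, hc2⟩ := hcol
    obtain ⟨c₁⟩ := hc1
    obtain ⟨c₂⟩ := hc2
    set f : α × β → Fin 2 := fun p => c₁ p.1 + c₂ p.2 with hf
    have hstep : ∀ x y z w : Fin 2, x ≠ y → z ≠ w → x + z = y + w := by decide
    have key : ∀ {p q : α × β}, (tensorProd G₁ G₂).Reachable p q → f p = f q := by
      intro p q hr
      obtain ⟨w⟩ := hr
      induction w with
      | nil => rfl
      | cons h _ ih =>
        exact (hstep _ _ _ _ (c₁.valid h.1) (c₂.valid h.2)).trans ih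
    obtain ⟨e, he⟩ := he₁
    induction e with
    | _ u v =>
      rw [mem_edgeSet] at he
      have hβ : Nonempty β := h₂.nonempty
      obtain ⟨b⟩ := hβ
      have := key (hconn.preconnected (u, b) (v, b))
      simp only [hf] at this
      exact c₁.valid he (by
        have := add_right_cancel this
        exact this)
  · intro h
    refine tensor_connected h₁ h₂ he₁ he₂ ?_
    rcases h with h | h
    · exact Or.inl (exists_odd_closed_walk h₁ h)
    · exact Or.inr (exists_odd_closed_walk h₂ h)
end

section
/- Let G be a connected nonbipartite graph with κ(G) = δ(G) ≥ 1, n ≥ 3, and S ⊆ V(G × Kₙ) with |S| = (n−1)δ(G), such that every fiber S_i = {u_i} × V(Kₙ) satisfies S_i' := S_i − S ≠ ∅ and G × Kₙ − S has no isolated vertex. Then each set S_i' is contained in the vertex set of a single connected component of G × Kₙ − S. -/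
set_option maxHeartbeats 1000000


open SimpleGraph

noncomputable def cmk {α : Type*} (G : SimpleGraph α) (n : ℕ) (S : Set (α × Fin n))
    (p : α × Fin n) (hp : p ∉ S) :
    ((tensorProd G (⊤ : SimpleGraph (Fin n))).induce Sᶜ).ConnectedComponent :=
  ((tensorProd G (⊤ : SimpleGraph (Fin n))).induce Sᶜ).connectedComponentMk ⟨p, hp⟩

theorem cmk_adj {α : Type*} (G : SimpleGraph α) (n : ℕ) (S : Set (α × Fin n))
    {a b : α} {x y : Fin n} (hG : G.Adj a b) (hxy : x ≠ y)
    (ha : (a,x) ∉ S) (hb : (b,y) ∉ S) :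
    cmk G n S (a,x) ha = cmk G n S (b,y) hb := by
  apply SimpleGraph.ConnectedComponent.sound
  apply SimpleGraph.Adj.reachable
  show (tensorProd G (⊤ : SimpleGraph (Fin n))).Adj (a,x) (b,y)
  exact ⟨hG, hxy⟩

theorem fiber_nbr {α : Type*} (G : SimpleGraph α) (n : ℕ) (S : Set (α × Fin n))
    {w w' : α} {v1 v2 : Fin n} (hw1 : (w,v1) ∉ S) (hw2 : (w,v2) ∉ S)
    (hsp : cmk G n S (w,v1) hw1 ≠ cmk G n S (w,v2) hw2)
    (hadj : G.Adj w w') {x : Fin n} (hx1 : x ≠ v1) (hx2 : x ≠ v2) :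
    (w', x) ∈ S := by
  by_contra hxS
  exact hsp ((cmk_adj G n S hadj (Ne.symm hx1) hw1 hxS).trans
    (cmk_adj G n S hadj.symm hx2 hxS hw2))

theorem fiber_self {α : Type*} (G : SimpleGraph α) (n : ℕ) (S : Set (α × Fin n))
    (hniso : ∀ x ∉ S, ∃ y ∉ S, (tensorProd G (⊤ : SimpleGraph (Fin n))).Adj x y)
    {w : α} {v1 v2 : Fin n} (hw1 : (w,v1) ∉ S) (hw2 : (w,v2) ∉ S) (hvne : v1 ≠ v2)
    (hsp : cmk G n S (w,v1) hw1 ≠ cmk G n S (w,v2) hw2)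
    {x : Fin n} (hx1 : x ≠ v1) (hx2 : x ≠ v2) :
    (w, x) ∈ S := by
  by_contra hxS
  have E1 : ∃ w₁, ∃ _ : (w₁, v1) ∉ S, G.Adj w w₁ := by
    obtain ⟨y, hyS, hyadj⟩ := hniso (w,v2) hw2
    obtain ⟨hG, hne⟩ := hyadj
    have hy2 : y.2 = v1 := by
      by_contra hne1
      rcases eq_or_ne y.2 v2 with h | h
      · exact hne (h ▸ rfl)
      · exact hyS (by
          have := fiber_nbr G n S hw1 hw2 hsp hG hne1 h
          simpa using this)
    exact ⟨y.1, by rw [← hy2]; exact fun h => hyS (by simpa using h), hG⟩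
  have E2 : ∃ w₂, ∃ _ : (w₂, v2) ∉ S, G.Adj w w₂ := by
    obtain ⟨y, hyS, hyadj⟩ := hniso (w,v1) hw1
    obtain ⟨hG, hne⟩ := hyadj
    have hy2 : y.2 = v2 := by
      by_contra hne2
      rcases eq_or_ne y.2 v1 with h | h
      · exact hne (h ▸ rfl)
      · exact hyS (by
          have := fiber_nbr G n S hw1 hw2 hsp hG h hne2
          simpa using this)
    exact ⟨y.1, by rw [← hy2]; exact fun h => hyS (by simpa using h), hG⟩
  obtain ⟨w₁, hg1, ha1⟩ := E1
  obtain ⟨w₂, hg2, ha2⟩ := E2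
  apply hsp
  calc cmk G n S (w,v1) hw1 = cmk G n S (w₂,v2) hg2 := cmk_adj G n S ha2 hvne hw1 hg2
    _ = cmk G n S (w,x) hxS := cmk_adj G n S ha2.symm (Ne.symm hx2) hg2 hxS
    _ = cmk G n S (w₁,v1) hg1 := cmk_adj G n S ha1 hx1 hxS hg1
    _ = cmk G n S (w,v2) hw2 := cmk_adj G n S ha1.symm hvne hg1 hw2

theorem aux_split {α : Type*} [Fintype α] [Nonempty α] (G : SimpleGraph α) [DecidableRel G.Adj]
    (hbip : ¬ G.Colorable 2)
    (hk : kappa G = G.minDegree)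
    (n : ℕ) (hn : 3 ≤ n) (S : Set (α × Fin n))
    (hcard : S.ncard = (n - 1) * G.minDegree)
    (hfiber : ∀ u : α, ∃ v : Fin n, (u, v) ∉ S)
    (hniso : ∀ x ∉ S, ∃ y ∉ S, (tensorProd G (⊤ : SimpleGraph (Fin n))).Adj x y)
    (u₀ : α) (v1 v2 : Fin n) (h1 : (u₀, v1) ∉ S) (h2 : (u₀, v2) ∉ S)
    (hsplit : cmk G n S (u₀,v1) h1 ≠ cmk G n S (u₀,v2) h2) : False := by
  classical
  set C1 := cmk G n S (u₀,v1) h1 with hC1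
  set C2 := cmk G n S (u₀,v2) h2 with hC2
  have hvne : v1 ≠ v2 := by
    rintro rfl
    exact hsplit rfl
  set P1 : α → Prop := fun w => ∃ (a : (w,v1) ∉ S) (b : (w,v2) ∉ S),
    cmk G n S (w,v1) a = C1 ∧ cmk G n S (w,v2) b = C2 with hP1def
  set P2 : α → Prop := fun w => ∃ (a : (w,v1) ∉ S) (b : (w,v2) ∉ S),
    cmk G n S (w,v1) a = C2 ∧ cmk G n S (w,v2) b = C1 with hP2def
  -- a vertex in P1 ∨ P2 is split
  have hsplitW : ∀ w (a : (w,v1) ∉ S) (b : (w,v2) ∉ S), (P1 w ∨ P2 w) →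
      cmk G n S (w,v1) a ≠ cmk G n S (w,v2) b := by
    rintro w a b (⟨a', b', e1, e2⟩ | ⟨a', b', e1, e2⟩) h
    · exact hsplit ((e1.symm.trans h).trans e2)
    · exact hsplit ((e2.symm.trans h.symm).trans e1)
  have hstep : ∀ w w', G.Adj w w' → (P1 w ∨ P2 w) →
      ∀ (a : (w',v1) ∉ S) (b : (w',v2) ∉ S), (P1 w' ∨ P2 w') := by
    rintro w w' hadj (⟨a, b, e1, e2⟩ | ⟨a, b, e1, e2⟩) a' b'
    · exact Or.inr ⟨a', b',
        (cmk_adj G n S hadj.symm hvne a' b).trans e2,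
        (cmk_adj G n S hadj.symm (Ne.symm hvne) b' a).trans e1⟩
    · exact Or.inl ⟨a', b',
        (cmk_adj G n S hadj.symm hvne a' b).trans e2,
        (cmk_adj G n S hadj.symm (Ne.symm hvne) b' a).trans e1⟩
  have hind1 : ∀ w w', P1 w → P1 w' → G.Adj w w' → False := by
    rintro w w' ⟨a, b, e1, e2⟩ ⟨a', b', e1', e2'⟩ hadj
    exact hsplit (e1.symm.trans ((cmk_adj G n S hadj hvne a b').trans e2'))
  have hind2 : ∀ w w', P2 w → P2 w' → G.Adj w w' → False := by
    rintro w w' ⟨a, b, e1, e2⟩ ⟨a', b', e1', e2'⟩ hadj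
    have e : cmk G n S (w,v1) a = cmk G n S (w',v2) b' := cmk_adj G n S hadj hvne a b'
    exact hsplit ((e1.symm.trans (e.trans e2')).symm)
  have hnoBoth : ∀ z p q, P1 p → P2 q → G.Adj z p → G.Adj z q → False := by
    rintro z p q ⟨a, b, e1, e2⟩ ⟨a', b', e1', e2'⟩ hzp hzq
    obtain ⟨v, hv⟩ := hfiber z
    rcases eq_or_ne v v1 with rfl | hvv1
    · have ep : cmk G n S (z,v) hv = cmk G n S (p,v2) b := cmk_adj G n S hzp hvne hv b
      have eq' : cmk G n S (z,v) hv = cmk G n S (q,v2) b' := cmk_adj G n S hzq hvne hv b'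
      exact hsplit ((eq'.trans e2').symm.trans (ep.trans e2))
    · rcases eq_or_ne v v2 with rfl | hvv2
      · have ep : cmk G n S (z,v) hv = cmk G n S (p,v1) a :=
          cmk_adj G n S hzp (Ne.symm hvne) hv a
        have eq' : cmk G n S (z,v) hv = cmk G n S (q,v1) a' :=
          cmk_adj G n S hzq (Ne.symm hvne) hv a'
        exact hsplit ((ep.trans e1).symm.trans (eq'.trans e1'))
      · exact hv (fiber_nbr G n S a b (hsplitW p a b (Or.inl ⟨a,b,e1,e2⟩)) hzp.symm hvv1 hvv2)
  -- Finsets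
  set Pf : Finset α := Finset.univ.filter P1 with hPf
  set Qf : Finset α := Finset.univ.filter P2 with hQf
  set Wf : Finset α := Finset.univ.filter (fun w => P1 w ∨ P2 w) with hWf
  set Nf : Finset α := Finset.univ.filter
    (fun z => ¬ (P1 z ∨ P2 z) ∧ ∃ w, (P1 w ∨ P2 w) ∧ G.Adj z w) with hNf
  have hu₀P : P1 u₀ := ⟨h1, h2, rfl, rfl⟩
  have hWNdisj : Disjoint Wf Nf := by
    rw [Finset.disjoint_left]
    intro z hz hz'
    rw [hWf, Finset.mem_filter] at hz
    rw [hNf, Finset.mem_filter] at hz'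
    exact hz'.2.1 hz.2
  have hPQdisj : Disjoint Pf Qf := by
    rw [Finset.disjoint_left]
    intro z hz hz'
    rw [hPf, Finset.mem_filter] at hz
    rw [hQf, Finset.mem_filter] at hz'
    obtain ⟨a, b, e1, e2⟩ := hz.2
    obtain ⟨a', b', e1', e2'⟩ := hz'.2
    exact hsplit (e1.symm.trans e1')
  have hWfeq : Wf = Pf ∪ Qf := by
    rw [hWf, hPf, hQf, ← Finset.filter_or]
  -- counting
  set F : Finset (α × Fin n) := (Set.toFinite S).toFinset with hF
  have hmemF : ∀ p : α × Fin n, p ∈ F ↔ p ∈ S := fun p => Set.Finite.mem_toFinset _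
  have hFcard : F.card = (n - 1) * G.minDegree := by
    rw [← hcard, Set.ncard_eq_toFinset_card S (Set.toFinite S)]
  have hfibsum : F.card = ∑ w : α, (F.filter (fun p => p.1 = w)).card :=
    Finset.card_eq_sum_card_fiberwise (fun x _ => Finset.mem_univ _)
  have cnt1 : ∀ w ∈ Wf, n - 2 ≤ (F.filter (fun p => p.1 = w)).card := by
    intro w hw
    rw [hWf, Finset.mem_filter] at hw
    have hsub : (({v1, v2} : Finset (Fin n))ᶜ).image (fun v => (w, v)) ⊆
        F.filter (fun p => p.1 = w) := by
      intro p hp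
      simp only [Finset.mem_image, Finset.mem_compl, Finset.mem_insert,
        Finset.mem_singleton, not_or] at hp
      obtain ⟨v, ⟨hvv1, hvv2⟩, rfl⟩ := hp
      rw [Finset.mem_filter, hmemF]
      rcases hw.2 with ⟨a, b, _, _⟩ | ⟨a, b, _, _⟩ <;>
        exact ⟨fiber_self G n S hniso a b hvne (hsplitW w a b hw.2) hvv1 hvv2, rfl⟩
    calc n - 2 = (({v1, v2} : Finset (Fin n))ᶜ).card := by
          rw [Finset.card_compl, Finset.card_pair hvne, Fintype.card_fin]
      _ = ((({v1, v2} : Finset (Fin n))ᶜ).image (fun v => (w, v))).card := by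
          rw [Finset.card_image_of_injective _ (fun x y hxy => (Prod.ext_iff.mp hxy).2)]
      _ ≤ _ := Finset.card_le_card hsub
  have cnt2 : ∀ z ∈ Nf, n - 1 ≤ (F.filter (fun p => p.1 = z)).card := by
    intro z hz
    rw [hNf, Finset.mem_filter] at hz
    obtain ⟨-, hzW, w, hwW, hadj⟩ := hz
    have hfib' : ∀ x : Fin n, x ≠ v1 → x ≠ v2 → (z, x) ∈ S := by
      rcases id hwW with ⟨a, b, -, -⟩ | ⟨a, b, -, -⟩ <;>
        exact fun x hx1 hx2 => fiber_nbr G n S a b (hsplitW w a b hwW) hadj.symm hx1 hx2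
    have hone : (z, v1) ∈ S ∨ (z, v2) ∈ S := by
      by_contra hcon
      push_neg at hcon
      exact hzW (hstep w z hadj.symm hwW hcon.1 hcon.2)
    have key : ∀ v0 : Fin n, (∀ x : Fin n, x ≠ v0 → (z, x) ∈ S) →
        n - 1 ≤ (F.filter (fun p => p.1 = z)).card := by
      intro v0 hv0
      have hsub : (({v0} : Finset (Fin n))ᶜ).image (fun v => (z, v)) ⊆
          F.filter (fun p => p.1 = z) := by
        intro p hp
        simp only [Finset.mem_image, Finset.mem_compl, Finset.mem_singleton] at hp
        obtain ⟨v, hvv, rfl⟩ := hp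
        rw [Finset.mem_filter, hmemF]
        exact ⟨hv0 v hvv, rfl⟩
      calc n - 1 = (({v0} : Finset (Fin n))ᶜ).card := by
            rw [Finset.card_compl, Finset.card_singleton, Fintype.card_fin]
        _ = ((({v0} : Finset (Fin n))ᶜ).image (fun v => (z, v))).card := by
            rw [Finset.card_image_of_injective _ (fun x y hxy => (Prod.ext_iff.mp hxy).2)]
        _ ≤ _ := Finset.card_le_card hsub
    rcases hone with hone | hone
    · exact key v2 (fun x hx => by
        rcases eq_or_ne x v1 with rfl | hx1
        · exact hone
        · exact hfib' x hx1 hx)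
    · exact key v1 (fun x hx => by
        rcases eq_or_ne x v2 with rfl | hx2
        · exact hone
        · exact hfib' x hx hx2)
  have hsum : (n - 2) * Wf.card + (n - 1) * Nf.card ≤ (n - 1) * G.minDegree := by
    calc (n - 2) * Wf.card + (n - 1) * Nf.card
        = (∑ _w ∈ Wf, (n - 2)) + (∑ _z ∈ Nf, (n - 1)) := by
          rw [Finset.sum_const, Finset.sum_const, smul_eq_mul, smul_eq_mul,
            mul_comm, mul_comm (Nf.card)]
      _ ≤ (∑ w ∈ Wf, (F.filter (fun p => p.1 = w)).card)
          + (∑ z ∈ Nf, (F.filter (fun p => p.1 = z)).card) :=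
          Nat.add_le_add (Finset.sum_le_sum cnt1) (Finset.sum_le_sum cnt2)
      _ = ∑ w ∈ Wf ∪ Nf, (F.filter (fun p => p.1 = w)).card :=
          (Finset.sum_union hWNdisj).symm
      _ ≤ ∑ w : α, (F.filter (fun p => p.1 = w)).card :=
          Finset.sum_le_sum_of_subset (Finset.subset_univ _)
      _ = F.card := hfibsum.symm
      _ = (n - 1) * G.minDegree := hFcard
  have hdeg : G.minDegree + 1 ≤ Wf.card + Nf.card := by
    have hsub : insert u₀ (G.neighborFinset u₀) ⊆ Wf ∪ Nf := by
      intro w hw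
      rcases Finset.mem_insert.mp hw with rfl | hw
      · exact Finset.mem_union_left _ (by simp [hWf, Or.inl hu₀P])
      · rw [SimpleGraph.mem_neighborFinset] at hw
        by_cases hwW : P1 w ∨ P2 w
        · exact Finset.mem_union_left _ (by simp [hWf, hwW])
        · exact Finset.mem_union_right _ (by
            simp only [hNf, Finset.mem_filter, Finset.mem_univ, true_and]
            exact ⟨hwW, u₀, Or.inl hu₀P, hw.symm⟩)
    calc G.minDegree + 1 ≤ G.degree u₀ + 1 :=
          Nat.add_le_add_right (G.minDegree_le_degree u₀) 1
      _ = (insert u₀ (G.neighborFinset u₀)).card := by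
          rw [Finset.card_insert_of_notMem (by simp), G.card_neighborFinset_eq_degree]
      _ ≤ (Wf ∪ Nf).card := Finset.card_le_card hsub
      _ ≤ Wf.card + Nf.card := Finset.card_union_le _ _
  -- arithmetic consequences
  obtain ⟨t, rfl⟩ : ∃ t, n = t + 3 := ⟨n - 3, by omega⟩
  have e1 : t + 3 - 1 = t + 2 := by omega
  have e2 : t + 3 - 2 = t + 1 := by omega
  rw [e1, e2] at hsum
  have hb1 : Nf.card + t + 1 ≤ G.minDegree := by
    nlinarith [Nat.mul_le_mul_left (t + 1) hdeg]
  have hab : Wf.card + 2 * Nf.card ≤ 2 * G.minDegree := by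
    nlinarith [Nat.mul_le_mul_left t hdeg]
  -- connectivity: every vertex is in W ∪ N
  have hnotsep : ¬ IsSeparating G (↑Nf : Set α) := by
    intro hsep
    have hle : kappa G ≤ (↑Nf : Set α).ncard := Nat.sInf_le ⟨↑Nf, hsep, rfl⟩
    rw [hk, Set.ncard_coe_finset] at hle
    omega
  have hconn2 : (G.induce (↑Nf : Set α)ᶜ).Connected := by
    rw [IsSeparating, not_or, not_not] at hnotsep
    exact hnotsep.2
  have hu₀N : u₀ ∉ Nf := by
    simp only [hNf, Finset.mem_filter, Finset.mem_univ, true_and, not_and, not_or]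
    intro h
    exact absurd hu₀P h.1
  have htrich : ∀ z : α, P1 z ∨ P2 z ∨ z ∈ Nf := by
    intro z
    by_cases hz : z ∈ Nf
    · exact Or.inr (Or.inr hz)
    · have hzc : z ∈ ((↑Nf : Set α)ᶜ : Set α) := by simpa using hz
      have hu₀c : u₀ ∈ ((↑Nf : Set α)ᶜ : Set α) := by simpa using hu₀N
      obtain ⟨p⟩ := hconn2.preconnected ⟨u₀, hu₀c⟩ ⟨z, hzc⟩
      have claim : ∀ (x y : ((↑Nf : Set α)ᶜ : Set α)),
          (G.induce ((↑Nf : Set α)ᶜ)).Walk x y → (P1 x.1 ∨ P2 x.1) → (P1 y.1 ∨ P2 y.1) := by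
        intro x y p
        induction p with
        | nil => exact id
        | @cons a b c hadj p ih =>
          intro hx
          apply ih
          have hGadj : G.Adj a.1 b.1 := hadj
          by_contra hb
          have : b.1 ∈ Nf := by
            simp only [hNf, Finset.mem_filter, Finset.mem_univ, true_and]
            exact ⟨hb, a.1, hx, hGadj.symm⟩
          exact b.2 (Finset.mem_coe.mpr this)
      rcases claim _ _ p (Or.inl hu₀P) with h | h
      · exact Or.inl h
      · exact Or.inr (Or.inl h)
  -- endgame
  have hPQn : ∀ z, P1 z → P2 z → False := by
    rintro z ⟨a, b, e1', e2'⟩ ⟨a', b', e1'', e2''⟩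
    exact hsplit (e1'.symm.trans e1'')
  have hnbrP : ∀ p, P1 p → G.neighborFinset p ⊆ Qf ∪ Nf := by
    intro p hp w' hw'
    rw [SimpleGraph.mem_neighborFinset] at hw'
    rcases htrich w' with h | h | h
    · exact (hind1 p w' hp h hw').elim
    · exact Finset.mem_union_left _ (by simp [hQf, h])
    · exact Finset.mem_union_right _ h
  have hnbrQ : ∀ q, P2 q → G.neighborFinset q ⊆ Pf ∪ Nf := by
    intro q hq w' hw'
    rw [SimpleGraph.mem_neighborFinset] at hw'
    rcases htrich w' with h | h | h
    · exact Finset.mem_union_left _ (by simp [hPf, h])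
    · exact (hind2 q w' hq h hw').elim
    · exact Finset.mem_union_right _ h
  have hdegQ : G.minDegree ≤ Qf.card + Nf.card :=
    calc G.minDegree ≤ G.degree u₀ := G.minDegree_le_degree u₀
      _ = (G.neighborFinset u₀).card := (G.card_neighborFinset_eq_degree u₀).symm
      _ ≤ (Qf ∪ Nf).card := Finset.card_le_card (hnbrP u₀ hu₀P)
      _ ≤ Qf.card + Nf.card := Finset.card_union_le _ _
  have hq : ∃ q, P2 q := by
    have hns : ¬ G.neighborFinset u₀ ⊆ Nf := by
      intro hsub
      have : G.minDegree ≤ Nf.card :=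
        le_trans (le_trans (G.minDegree_le_degree u₀)
          (G.card_neighborFinset_eq_degree u₀).symm.le) (Finset.card_le_card hsub)
      omega
    obtain ⟨w', hw'mem, hw'N⟩ := Finset.not_subset.mp hns
    rw [SimpleGraph.mem_neighborFinset] at hw'mem
    rcases htrich w' with h | h | h
    · exact (hind1 u₀ w' hu₀P h hw'mem).elim
    · exact ⟨w', h⟩
    · exact (hw'N h).elim
  obtain ⟨q, hqP2⟩ := hq
  have hdegP : G.minDegree ≤ Pf.card + Nf.card :=
    calc G.minDegree ≤ G.degree q := G.minDegree_le_degree q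
      _ = (G.neighborFinset q).card := (G.card_neighborFinset_eq_degree q).symm
      _ ≤ (Pf ∪ Nf).card := Finset.card_le_card (hnbrQ q hqP2)
      _ ≤ Pf.card + Nf.card := Finset.card_union_le _ _
  have haeq : Wf.card = Pf.card + Qf.card := by
    rw [hWfeq, Finset.card_union_of_disjoint hPQdisj]
  by_cases hNzero : Nf.card = 0
  · -- N empty: P/Q is a proper 2-colouring, contradiction with nonbipartiteness
    have hNempty : Nf = ∅ := Finset.card_eq_zero.mp hNzero
    apply hbip
    refine ⟨SimpleGraph.Coloring.mk (fun w => if P1 w then (0 : Fin 2) else 1) ?_⟩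
    intro x y hadj hfeq
    have hx := htrich x
    have hy := htrich y
    rw [hNempty] at hx hy
    simp only [Finset.notMem_empty, or_false] at hx hy
    split_ifs at hfeq with hx' hy' hy'
    · exact hind1 x y hx' hy' hadj
    · exact absurd hfeq (by decide)
    · exact absurd hfeq (by decide)
    · rcases hx with hx | hx
      · exact hx' hx
      · rcases hy with hy | hy
        · exact hy' hy
        · exact hind2 x y hx hy hadj
  · -- N nonempty: a vertex of N has degree ≤ δ - 1, contradiction
    obtain ⟨z, hzN⟩ := Finset.card_pos.mp (Nat.pos_of_ne_zero hNzero)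
    have hzW : ¬ (P1 z ∨ P2 z) := by
      rw [hNf, Finset.mem_filter] at hzN
      exact hzN.2.1
    have hone : (∀ w' ∈ G.neighborFinset z, ¬ P1 w') ∨ (∀ w' ∈ G.neighborFinset z, ¬ P2 w') := by
      by_contra hcon
      push_neg at hcon
      obtain ⟨⟨p, hpmem, hpP⟩, ⟨q', hqmem, hqQ⟩⟩ := hcon
      rw [SimpleGraph.mem_neighborFinset] at hpmem hqmem
      exact hnoBoth z p q' hpP hqQ hpmem hqmem
    have hcard' : ∀ (Xf : Finset α), (∀ w' ∈ G.neighborFinset z, w' ∈ Xf ∪ Nf.erase z) →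
        G.minDegree ≤ Xf.card + (Nf.card - 1) := by
      intro Xf hsub
      calc G.minDegree ≤ G.degree z := G.minDegree_le_degree z
        _ = (G.neighborFinset z).card := (G.card_neighborFinset_eq_degree z).symm
        _ ≤ (Xf ∪ Nf.erase z).card := Finset.card_le_card hsub
        _ ≤ Xf.card + (Nf.erase z).card := Finset.card_union_le _ _
        _ = Xf.card + (Nf.card - 1) := by rw [Finset.card_erase_of_mem hzN]
    rcases hone with hone | hone
    · -- no neighbour in P
      have hsub : ∀ w' ∈ G.neighborFinset z, w' ∈ Qf ∪ Nf.erase z := by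
        intro w' hw'
        have hadj : G.Adj z w' := (SimpleGraph.mem_neighborFinset _ _ _).mp hw'
        rcases htrich w' with h | h | h
        · exact (hone w' hw' h).elim
        · exact Finset.mem_union_left _ (by simp [hQf, h])
        · exact Finset.mem_union_right _ (Finset.mem_erase.mpr ⟨hadj.ne', h⟩)
      have := hcard' Qf hsub
      omega
    · have hsub : ∀ w' ∈ G.neighborFinset z, w' ∈ Pf ∪ Nf.erase z := by
        intro w' hw'
        have hadj : G.Adj z w' := (SimpleGraph.mem_neighborFinset _ _ _).mp hw'
        rcases htrich w' with h | h | h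
        · exact Finset.mem_union_left _ (by simp [hPf, h])
        · exact (hone w' hw' h).elim
        · exact Finset.mem_union_right _ (Finset.mem_erase.mpr ⟨hadj.ne', h⟩)
      have := hcard' Pf hsub
      omega

theorem stmt17 {α : Type*} [Fintype α] [Nonempty α] (G : SimpleGraph α) [DecidableRel G.Adj]
    (hconn : G.Connected) (hbip : ¬ G.Colorable 2)
    (hk : kappa G = G.minDegree) (hd : 1 ≤ G.minDegree)
    (n : ℕ) (hn : 3 ≤ n) (S : Set (α × Fin n))
    (hcard : S.ncard = (n - 1) * G.minDegree)
    (hfiber : ∀ u : α, ∃ v : Fin n, (u, v) ∉ S)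
    (hniso : ∀ x ∉ S, ∃ y ∉ S, (tensorProd G (⊤ : SimpleGraph (Fin n))).Adj x y) :
    ∀ u : α, ∃ C : ((tensorProd G (⊤ : SimpleGraph (Fin n))).induce Sᶜ).ConnectedComponent,
      ∀ x : ↥(Sᶜ), (x : α × Fin n).1 = u →
        ((tensorProd G (⊤ : SimpleGraph (Fin n))).induce Sᶜ).connectedComponentMk x = C := by
  classical
  intro u
  by_contra hcon
  push_neg at hcon
  obtain ⟨v, hv⟩ := hfiber u
  obtain ⟨x, hx1, hx2⟩ := hcon (cmk G n S (u, v) hv)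
  obtain ⟨⟨a, v'⟩, hmem⟩ := x
  dsimp only at hx1
  subst hx1
  exact aux_split G hbip hk n hn S hcard hfiber hniso a v' v hmem hv hx2
end

section
/- Let G be a graph with κ(G) = δ(G), n ≥ 3, and suppose S ⊆ V(G × Kₙ) with |S| = (n−1)δ(G) contains an entire fiber S_i = {u_i} × V(Kₙ) for some vertex u_i of G. Then (G × Kₙ) − S is connected. -/
set_option linter.unusedSectionVars false
set_option maxHeartbeats 1000000

open SimpleGraph

namespace Stmt18Aux

variable {V : Type*} {G : SimpleGraph V} {S : Set V}

/-- Reachability in `G` avoiding the set `S`. -/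
def Reach (G : SimpleGraph V) (S : Set V) (a b : V) : Prop :=
  ∃ (ha : a ∈ Sᶜ) (hb : b ∈ Sᶜ), (G.induce Sᶜ).Reachable ⟨a, ha⟩ ⟨b, hb⟩

lemma Reach.refl {a : V} (ha : a ∉ S) : Reach G S a a := ⟨ha, ha, .refl _⟩

lemma Reach.symm {a b : V} (h : Reach G S a b) : Reach G S b a := by
  obtain ⟨ha, hb, r⟩ := h; exact ⟨hb, ha, r.symm⟩

lemma Reach.trans {a b c : V} (h1 : Reach G S a b) (h2 : Reach G S b c) : Reach G S a c := by
  obtain ⟨ha, hb, r⟩ := h1; obtain ⟨hb', hc, r'⟩ := h2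
  exact ⟨ha, hc, r.trans r'⟩

lemma reach_adj {a b : V} (ha : a ∉ S) (hb : b ∉ S) (h : G.Adj a b) : Reach G S a b :=
  ⟨ha, hb, Adj.reachable (by simpa using h)⟩

lemma connected_of_reach (hne : ∃ a, a ∉ S)
    (h : ∀ a b, a ∉ S → b ∉ S → Reach G S a b) : (G.induce Sᶜ).Connected := by
  obtain ⟨a, ha⟩ := hne
  haveI : Nonempty (↥Sᶜ) := ⟨⟨a, ha⟩⟩
  refine ⟨fun x y => ?_⟩
  obtain ⟨hx, hy, r⟩ := h x.1 y.1 x.2 y.2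
  exact r

end Stmt18Aux

namespace Stmt18Aux

variable {α : Type*} [Fintype α] [DecidableEq α] {n : ℕ}

/-- number of deleted vertices in the fiber over `z`. -/
def fibDel (S : Finset (α × Fin n)) (z : α) : ℕ :=
  (Finset.univ.filter fun k : Fin n => (z, k) ∈ S).card

lemma fibDel_eq (S : Finset (α × Fin n)) (z : α) :
    fibDel S z = (S.filter fun p => p.1 = z).card := by
  apply Finset.card_bij (fun (k : Fin n) _ => (z, k))
  · intro k hk
    simp only [Finset.mem_filter, Finset.mem_univ, true_and] at hk
    simp [hk]
  · intro k1 h1 k2 h2 h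
    exact congrArg Prod.snd h
  · intro p hp
    simp only [Finset.mem_filter] at hp
    exact ⟨p.2, by simp [← hp.2, hp.1], by simp [← hp.2]⟩

lemma sum_fibDel (S : Finset (α × Fin n)) : ∑ z : α, fibDel S z = S.card := by
  rw [Finset.card_eq_sum_card_fiberwise (f := Prod.fst) (t := Finset.univ)
    (fun x _ => Finset.mem_univ _)]
  exact Finset.sum_congr rfl fun z _ => fibDel_eq S z

lemma fibDel_add_surv (S : Finset (α × Fin n)) (z : α) :
    fibDel S z + (Finset.univ.filter fun k : Fin n => (z, k) ∉ S).card = n := by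
  rw [fibDel, Finset.card_filter_add_card_filter_not]
  simp

lemma fibDel_eq_n (S : Finset (α × Fin n)) (z : α) (h : ∀ k, (z, k) ∈ S) :
    fibDel S z = n := by
  rw [fibDel, Finset.filter_true_of_mem fun k _ => h k]
  simp

lemma exists_surv_ne (S : Finset (α × Fin n)) (z : α) (h : fibDel S z ≤ n - 2)
    (hn : 3 ≤ n) (j : Fin n) : ∃ k, k ≠ j ∧ (z, k) ∉ S := by
  have h1 := fibDel_add_surv S z
  set A := Finset.univ.filter fun k : Fin n => (z, k) ∉ S with hA
  have h2 : 2 ≤ A.card := by omega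
  have h3 : 1 ≤ (A.erase j).card := by
    have := Finset.pred_card_le_card_erase (s := A) (a := j)
    omega
  have h4 : (A.erase j).Nonempty := Finset.card_pos.mp (by omega)
  obtain ⟨k, hk⟩ := h4
  have := Finset.mem_erase.mp hk
  refine ⟨k, this.1, ?_⟩
  have := this.2
  rw [hA] at this
  simp only [Finset.mem_filter, Finset.mem_univ, true_and] at this
  exact this

lemma fib_ub (S : Finset (α × Fin n)) (z : α) (i i' : Fin n) (hne : i ≠ i')
    (hi : (z, i) ∉ S) (hi' : (z, i') ∉ S) : fibDel S z ≤ n - 2 := by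
  have h1 := fibDel_add_surv S z
  have hsub : ({i, i'} : Finset (Fin n)) ⊆ Finset.univ.filter fun k : Fin n => (z, k) ∉ S := by
    intro k hk
    simp only [Finset.mem_insert, Finset.mem_singleton] at hk
    rcases hk with rfl | rfl <;> simp [hi, hi']
  have h2 := Finset.card_le_card hsub
  rw [Finset.card_pair hne] at h2
  omega

lemma fib_lb (S : Finset (α × Fin n)) (z : α) (i i' : Fin n)
    (h : ∀ j : Fin n, j ≠ i → j ≠ i' → (z, j) ∈ S) : n - 2 ≤ fibDel S z := by
  have h1 := fibDel_add_surv S z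
  have hsub : (Finset.univ.filter fun k : Fin n => (z, k) ∉ S) ⊆ ({i, i'} : Finset (Fin n)) := by
    intro k hk
    simp only [Finset.mem_filter, Finset.mem_univ, true_and] at hk
    simp only [Finset.mem_insert, Finset.mem_singleton]
    by_contra hc
    push_neg at hc
    exact hk (h k hc.1 hc.2)
  have h2 := Finset.card_le_card hsub
  have h3 : ({i, i'} : Finset (Fin n)).card ≤ 2 :=
    (Finset.card_insert_le _ _).trans (by simp)
  omega

end Stmt18Aux

open Stmt18Aux Finset

theorem stmt18 {α : Type*} [Fintype α] [Nonempty α] (G : SimpleGraph α) [DecidableRel G.Adj]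
    (hconn : G.Connected) (hk : kappa G = G.minDegree) (hd : 1 ≤ G.minDegree)
    (n : ℕ) (hn : 3 ≤ n) (S : Set (α × Fin n))
    (hcard : S.ncard = (n - 1) * G.minDegree)
    (u : α) (hu : ∀ v : Fin n, (u, v) ∈ S) :
    ((tensorProd G (⊤ : SimpleGraph (Fin n))).induce Sᶜ).Connected := by
  classical
  set d := G.minDegree with hdd
  set Γ := tensorProd G (⊤ : SimpleGraph (Fin n)) with hΓ
  have tadj : ∀ (z z' : α) (k k' : Fin n), G.Adj z z' → k ≠ k' → Γ.Adj (z, k) (z', k') :=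
    fun z z' k k' h1 h2 => ⟨h1, h2⟩
  set Sf := S.toFinset with hSfdef
  have hmemSf : ∀ p : α × Fin n, p ∈ Sf ↔ p ∈ S := fun p => Set.mem_toFinset
  have hSfcard : Sf.card = (n - 1) * d := by
    rw [hSfdef, ← Set.ncard_eq_toFinset_card', hcard]
  set t := fibDel Sf with htdef
  have hsumt : ∑ z : α, t z = (n - 1) * d := by rw [htdef, sum_fibDel, hSfcard]
  -- degree facts
  have hdeg : ∀ (z : α) (Y : Finset α), (∀ y, G.Adj z y → y ∈ Y) → d ≤ Y.card := by
    intro z Y hY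
    calc d ≤ G.degree z := G.minDegree_le_degree z
      _ = (G.neighborFinset z).card := rfl
      _ ≤ Y.card := Finset.card_le_card
          (fun y hy => hY y (by simpa [SimpleGraph.mem_neighborFinset] using hy))
  -- d ≥ 2
  have hd2 : 2 ≤ d := by
    by_contra hcon
    have hd1 : d = 1 := by omega
    have hnS : n ≤ Sf.card := by
      have hsub : (Finset.univ.image (fun k : Fin n => (u, k))) ⊆ Sf := by
        intro p hp
        simp only [Finset.mem_image, Finset.mem_univ, true_and] at hp
        obtain ⟨k, rfl⟩ := hp
        exact (hmemSf _).mpr (hu k)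
      have hinj : Function.Injective (fun k : Fin n => (u, k)) :=
        fun a b h => congrArg Prod.snd h
      calc n = (Finset.univ.image (fun k : Fin n => (u, k))).card := by
            rw [Finset.card_image_of_injective _ hinj]; simp
        _ ≤ Sf.card := Finset.card_le_card hsub
    rw [hSfcard, hd1, mul_one] at hnS
    omega
  -- the set W of nearly-deleted fibers
  set W := Finset.univ.filter (fun z : α => n - 1 ≤ t z) with hWdef
  have hWmem : ∀ z, z ∈ W ↔ n - 1 ≤ t z := by
    intro z; rw [hWdef]; simp
  have htu : t u = n := fibDel_eq_n Sf u (fun k => (hmemSf _).mpr (hu k))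
  have huW : u ∈ W := (hWmem u).mpr (by omega)
  have htle : ∀ z, t z ≤ n := by
    intro z; have := fibDel_add_surv Sf z; rw [← htdef] at this; omega
  have hsumW : (n - 1) * W.card + 1 ≤ ∑ z ∈ W, t z := by
    rw [← Finset.sum_erase_add W t huW, htu]
    have h1 : (n - 1) * (W.erase u).card ≤ ∑ z ∈ W.erase u, t z := by
      calc (n - 1) * (W.erase u).card = ∑ _z ∈ W.erase u, (n - 1) := by
            rw [Finset.sum_const, smul_eq_mul, mul_comm]
        _ ≤ _ := Finset.sum_le_sum (fun z hz => (hWmem z).mp (Finset.mem_of_mem_erase hz))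
    have hcer : (W.erase u).card = W.card - 1 := Finset.card_erase_of_mem huW
    have hWpos : 1 ≤ W.card := Finset.card_pos.mpr ⟨u, huW⟩
    obtain ⟨w', hw'⟩ : ∃ w', W.card = w' + 1 := ⟨W.card - 1, by omega⟩
    rw [hw'] at hcer ⊢
    rw [hcer] at h1
    simp only [Nat.add_sub_cancel] at h1
    have : (n - 1) * (w' + 1) = (n - 1) * w' + (n - 1) := by ring
    omega
  have hsumWle : ∑ z ∈ W, t z ≤ (n - 1) * d := by
    rw [← hsumt]
    exact Finset.sum_le_sum_of_subset (Finset.subset_univ W)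
  have hWd : W.card < d := by
    by_contra hcon
    push_neg at hcon
    have := Nat.mul_le_mul_left (n - 1) hcon
    omega
  -- connectivity after removing fewer than d vertices
  have hlow : ∀ X : Set α, X.ncard < d → (G.induce Xᶜ).Connected := by
    intro X hX
    by_contra h'
    have : kappa G ≤ X.ncard := Nat.sInf_le ⟨X, Or.inr h', rfl⟩
    rw [hk] at this
    omega
  have hGW : (G.induce ((↑W : Set α))ᶜ).Connected :=
    hlow _ (by rw [Set.ncard_coe_finset]; exact hWd)
  -- every vertex has a neighbor outside W
  have hWnbr : ∀ y : α, ∃ z, G.Adj y z ∧ z ∉ W := by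
    intro y
    by_contra hcon
    push_neg at hcon
    have := hdeg y W (fun z hz => hcon z hz)
    omega
  -- fibers outside W have, for each index, a survivor with a different index
  have hA2 : ∀ z, z ∉ W → ∀ j : Fin n, ∃ k, k ≠ j ∧ (z, k) ∉ S := by
    intro z hz j
    have h2 : ¬ (n - 1 ≤ t z) := fun hh => hz ((hWmem z).mpr hh)
    have htz : t z ≤ n - 2 := by have := htle z; omega
    obtain ⟨k, hk1, hk2⟩ := exists_surv_ne Sf z htz hn j
    exact ⟨k, hk1, fun hc => hk2 ((hmemSf _).mpr hc)⟩
  -- main case split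
  by_cases hsame : ∀ (x : α) (i i' : Fin n), (x, i) ∉ S → (x, i') ∉ S →
      Reach Γ S (x, i) (x, i')
  · -- CASE B : no split fiber; prove connectivity directly
    have walkreach : ∀ (a b : ↥(((↑W : Set α))ᶜ)) (p : (G.induce ((↑W : Set α))ᶜ).Walk a b)
        (k k' : Fin n), (a.1, k) ∉ S → (b.1, k') ∉ S → Reach Γ S (a.1, k) (b.1, k') := by
      intro a b p
      induction p with
      | nil => intro k k' h1 h2; exact hsame _ k k' h1 h2
      | @cons v c w h p ih =>
          intro k k' h1 h2
          have hcW : c.1 ∉ W := fun hc => c.2 hc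
          obtain ⟨k₁, hk₁ne, hk₁⟩ := hA2 c.1 hcW k
          have hadj : G.Adj v.1 c.1 := by simpa using h
          exact (reach_adj h1 hk₁ (tadj _ _ _ _ hadj hk₁ne.symm)).trans (ih k₁ k' hk₁ h2)
    have reachbase : ∀ p : α × Fin n, p ∉ S →
        ∃ z k, z ∉ W ∧ (z, k) ∉ S ∧ Reach Γ S p (z, k) := by
      rintro ⟨y, j⟩ hp
      by_cases hyW : y ∈ W
      · obtain ⟨z, hadj, hzW⟩ := hWnbr y
        obtain ⟨k, hkj, hk⟩ := hA2 z hzW j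
        exact ⟨z, k, hzW, hk, reach_adj hp hk (tadj _ _ _ _ hadj hkj.symm)⟩
      · exact ⟨y, j, hyW, hp, Reach.refl hp⟩
    apply connected_of_reach
    · obtain ⟨z₀⟩ := hGW.nonempty
      have hz₀W : z₀.1 ∉ W := fun hc => z₀.2 hc
      obtain ⟨k, _, hk⟩ := hA2 z₀.1 hz₀W (⟨0, by omega⟩ : Fin n)
      exact ⟨(z₀.1, k), hk⟩
    · intro a b ha hb
      obtain ⟨z, k, hzW, hkS, hra⟩ := reachbase a ha
      obtain ⟨z', k', hzW', hkS', hrb⟩ := reachbase b hb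
      have hzm : z ∈ ((↑W : Set α))ᶜ := hzW
      have hzm' : z' ∈ ((↑W : Set α))ᶜ := hzW'
      obtain ⟨p⟩ := hGW.preconnected ⟨z, hzm⟩ ⟨z', hzm'⟩
      exact hra.trans ((walkreach _ _ p k k' hkS hkS').trans hrb.symm)
  · -- CASE A : a split fiber exists; derive a contradiction
    exfalso
    push_neg at hsame
    obtain ⟨x₀, i, i', hi, hi', hnr⟩ := hsame
    have hii' : i ≠ i' := by rintro rfl; exact hnr (Reach.refl hi)
    have htx₀ : t x₀ ≤ n - 2 :=
      fib_ub Sf x₀ i i' hii' (fun hc => hi ((hmemSf _).mp hc)) (fun hc => hi' ((hmemSf _).mp hc))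
    have hx₀W : x₀ ∉ W := by
      intro hc
      have := (hWmem x₀).mp hc
      omega
    -- the split-fiber property propagates through G - W
    have hstep : ∀ z z', ((z, i) ∉ S ∧ (z, i') ∉ S ∧ ¬ Reach Γ S (z, i) (z, i')) →
        G.Adj z z' → z' ∉ W →
        ((z', i) ∉ S ∧ (z', i') ∉ S ∧ ¬ Reach Γ S (z', i) (z', i')) := by
      intro z z' hz hadj hz'W
      obtain ⟨hzi, hzi', hznr⟩ := hz
      have hsub : ∀ j : Fin n, j ≠ i → j ≠ i' → (z', j) ∈ S := by
        intro j hj hj'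
        by_contra hjS
        exact hznr ((reach_adj hzi hjS (tadj _ _ _ _ hadj (Ne.symm hj))).trans
          (reach_adj hjS hzi' (tadj _ _ _ _ hadj.symm hj')))
      obtain ⟨k, hki, hkS⟩ := hA2 z' hz'W i
      have hki' : k = i' := by
        by_contra hc
        exact hkS (hsub k hki hc)
      obtain ⟨m, hmi', hmS⟩ := hA2 z' hz'W i'
      have hmi : m = i := by
        by_contra hc
        exact hmS (hsub m hc hmi')
      have hkS2 : (z', i') ∉ S := hki' ▸ hkS
      have hmS2 : (z', i) ∉ S := hmi ▸ hmS
      refine ⟨hmS2, hkS2, fun hr => ?_⟩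
      have r1 : Reach Γ S (z, i) (z', i') := reach_adj hzi hkS2 (tadj _ _ _ _ hadj hii')
      have r2 : Reach Γ S (z', i) (z, i') := reach_adj hmS2 hzi' (tadj _ _ _ _ hadj.symm hii')
      exact hznr (r1.trans (hr.symm.trans r2))
    have hPwalk : ∀ (a b : ↥(((↑W : Set α))ᶜ)) (_p : (G.induce ((↑W : Set α))ᶜ).Walk a b),
        ((a.1, i) ∉ S ∧ (a.1, i') ∉ S ∧ ¬ Reach Γ S (a.1, i) (a.1, i')) →
        ((b.1, i) ∉ S ∧ (b.1, i') ∉ S ∧ ¬ Reach Γ S (b.1, i) (b.1, i')) := by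
      intro a b p
      induction p with
      | nil => exact id
      | @cons v c w h p ih =>
          intro hv
          have hcW : c.1 ∉ W := fun hc => c.2 hc
          exact ih (hstep v.1 c.1 hv (by simpa using h) hcW)
    have hP : ∀ z, z ∉ W → ((z, i) ∉ S ∧ (z, i') ∉ S ∧ ¬ Reach Γ S (z, i) (z, i')) := by
      intro z hz
      obtain ⟨p⟩ := hGW.preconnected ⟨x₀, hx₀W⟩ ⟨z, hz⟩
      exact hPwalk _ _ p ⟨hi, hi', hnr⟩
    -- all survivors in fibers outside W have index i or i'
    have hall : ∀ z, z ∉ W → ∀ j : Fin n, j ≠ i → j ≠ i' → (z, j) ∈ S := by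
      intro z hz j hj hj'
      by_contra hjS
      obtain ⟨y, hadj, hyW⟩ := hWnbr z
      obtain ⟨hyi, hyi', hynr⟩ := hP y hyW
      exact hynr ((reach_adj hyi hjS (tadj _ _ _ _ hadj.symm (Ne.symm hj))).trans
        (reach_adj hjS hyi' (tadj _ _ _ _ hadj hj')))
    have htlb : ∀ z, z ∉ W → n - 2 ≤ t z := by
      intro z hz
      exact fib_lb Sf z i i' (fun j hj hj' => (hmemSf _).mpr (hall z hz j hj hj'))
    -- the two sides of the split
    set PF := Finset.univ.filter (fun z : α => z ∉ W ∧ Reach Γ S (x₀, i) (z, i)) with hPFdef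
    set PF' := Finset.univ.filter (fun z : α => z ∉ W ∧ Reach Γ S (x₀, i) (z, i')) with hPF'def
    have hPFmem : ∀ z, z ∈ PF ↔ (z ∉ W ∧ Reach Γ S (x₀, i) (z, i)) := by
      intro z; rw [hPFdef]; simp
    have hPF'mem : ∀ z, z ∈ PF' ↔ (z ∉ W ∧ Reach Γ S (x₀, i) (z, i')) := by
      intro z; rw [hPF'def]; simp
    have hx₀PF : x₀ ∈ PF := (hPFmem x₀).mpr ⟨hx₀W, Reach.refl hi⟩
    have hdisj : ∀ z, z ∈ PF → z ∈ PF' → False := by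
      intro z h1 h2
      obtain ⟨hzW, r1⟩ := (hPFmem z).mp h1
      obtain ⟨-, r2⟩ := (hPF'mem z).mp h2
      exact (hP z hzW).2.2 (r1.symm.trans r2)
    have hcovwalk : ∀ (a b : ↥(((↑W : Set α))ᶜ)) (_p : (G.induce ((↑W : Set α))ᶜ).Walk a b),
        (a.1 ∈ PF ∨ a.1 ∈ PF') → (b.1 ∈ PF ∨ b.1 ∈ PF') := by
      intro a b p
      induction p with
      | nil => exact id
      | @cons v c w h p ih =>
          intro hv
          apply ih
          have hvW : v.1 ∉ W := fun hc => v.2 hc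
          have hcW : c.1 ∉ W := fun hc => c.2 hc
          have hadj : G.Adj v.1 c.1 := by simpa using h
          obtain ⟨hvi, hvi', hvnr⟩ := hP v.1 hvW
          obtain ⟨hci, hci', hcnr⟩ := hP c.1 hcW
          rcases hv with h1 | h1
          · right
            obtain ⟨-, r⟩ := (hPFmem v.1).mp h1
            exact (hPF'mem c.1).mpr ⟨hcW, r.trans (reach_adj hvi hci' (tadj _ _ _ _ hadj hii'))⟩
          · left
            obtain ⟨-, r⟩ := (hPF'mem v.1).mp h1
            exact (hPFmem c.1).mpr
              ⟨hcW, r.trans (reach_adj hvi' hci (tadj _ _ _ _ hadj hii'.symm))⟩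
    have hcover : ∀ z, z ∉ W → z ∈ PF ∨ z ∈ PF' := by
      intro z hz
      obtain ⟨p⟩ := hGW.preconnected ⟨x₀, hx₀W⟩ ⟨z, hz⟩
      exact hcovwalk _ _ p (Or.inl hx₀PF)
    -- PF and PF' are independent sets
    have hindPF : ∀ z z', z ∈ PF → z' ∈ PF → ¬ G.Adj z z' := by
      intro z z' h1 h2 hadj
      obtain ⟨hzW, r1⟩ := (hPFmem z).mp h1
      obtain ⟨hz'W, r2⟩ := (hPFmem z').mp h2
      obtain ⟨hzi, hzi', hznr⟩ := hP z hzW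
      obtain ⟨hz'i, hz'i', hz'nr⟩ := hP z' hz'W
      exact hz'nr (r2.symm.trans (r1.trans (reach_adj hzi hz'i' (tadj _ _ _ _ hadj hii'))))
    have hindPF' : ∀ z z', z ∈ PF' → z' ∈ PF' → ¬ G.Adj z z' := by
      intro z z' h1 h2 hadj
      obtain ⟨hzW, r1⟩ := (hPF'mem z).mp h1
      obtain ⟨hz'W, r2⟩ := (hPF'mem z').mp h2
      obtain ⟨hzi, hzi', hznr⟩ := hP z hzW
      obtain ⟨hz'i, hz'i', hz'nr⟩ := hP z' hz'W
      exact hz'nr ((reach_adj hz'i hzi' (tadj _ _ _ _ hadj.symm hii')).trans (r1.symm.trans r2))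
    -- cardinality bounds
    have hPF'card : d ≤ PF'.card + W.card := by
      have hsub : ∀ y, G.Adj x₀ y → y ∈ PF' ∪ W := by
        intro y hy
        by_cases hyW : y ∈ W
        · exact Finset.mem_union_right _ hyW
        · rcases hcover y hyW with h1 | h1
          · exact absurd hy (hindPF x₀ y hx₀PF h1)
          · exact Finset.mem_union_left _ h1
      exact (hdeg x₀ _ hsub).trans (Finset.card_union_le _ _)
    have hPF'ne : PF'.Nonempty := Finset.card_pos.mp (by omega)
    obtain ⟨y₀, hy₀⟩ := hPF'ne
    have hPFcard : d ≤ PF.card + W.card := by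
      have hsub : ∀ y, G.Adj y₀ y → y ∈ PF ∪ W := by
        intro y hy
        by_cases hyW : y ∈ W
        · exact Finset.mem_union_right _ hyW
        · rcases hcover y hyW with h1 | h1
          · exact Finset.mem_union_left _ h1
          · exact absurd hy (hindPF' y₀ y hy₀ h1)
      exact (hdeg y₀ _ hsub).trans (Finset.card_union_le _ _)
    -- sum bounds
    have hDisj1 : Disjoint PF PF' := Finset.disjoint_left.mpr (fun {z} h1 h2 => hdisj z h1 h2)
    have hDisj2 : Disjoint (PF ∪ PF') W := by
      rw [Finset.disjoint_left]
      intro z hz hzW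
      rcases Finset.mem_union.mp hz with h1 | h1
      · exact ((hPFmem z).mp h1).1 hzW
      · exact ((hPF'mem z).mp h1).1 hzW
    have hsumsplit : (∑ z ∈ PF, t z + ∑ z ∈ PF', t z) + ∑ z ∈ W, t z ≤ (n - 1) * d := by
      rw [← Finset.sum_union hDisj1, ← Finset.sum_union hDisj2, ← hsumt]
      exact Finset.sum_le_sum_of_subset (Finset.subset_univ _)
    have hb1 : (n - 2) * PF.card ≤ ∑ z ∈ PF, t z := by
      calc (n - 2) * PF.card = ∑ _z ∈ PF, (n - 2) := by
            rw [Finset.sum_const, smul_eq_mul, mul_comm]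
        _ ≤ _ := Finset.sum_le_sum (fun z hz => htlb z ((hPFmem z).mp hz).1)
    have hb2 : (n - 2) * PF'.card ≤ ∑ z ∈ PF', t z := by
      calc (n - 2) * PF'.card = ∑ _z ∈ PF', (n - 2) := by
            rw [Finset.sum_const, smul_eq_mul, mul_comm]
        _ ≤ _ := Finset.sum_le_sum (fun z hz => htlb z ((hPF'mem z).mp hz).1)
    -- final arithmetic
    obtain ⟨m, rfl⟩ : ∃ m, n = m + 2 := ⟨n - 2, by omega⟩
    have e1 : m + 2 - 1 = m + 1 := by omega
    have e2 : m + 2 - 2 = m := by omega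
    rw [e2] at hb1 hb2
    rw [e1] at hsumW hsumsplit
    have hm1 : 1 ≤ m := by omega
    obtain ⟨s, hs1, hs2⟩ : ∃ s, 1 ≤ s ∧ d = W.card + s := ⟨d - W.card, by omega, by omega⟩
    rw [hs2] at hsumsplit
    have h2 : m * PF.card + m * PF'.card + ((m + 1) * W.card + 1) ≤
        (m + 1) * (W.card + s) := by
      have hadd := add_le_add (add_le_add hb1 hb2) hsumW
      exact hadd.trans hsumsplit
    have hsp : s ≤ PF.card := by omega
    have hsq : s ≤ PF'.card := by omega
    have g1 : m * s ≤ m * PF.card := mul_le_mul_right hsp m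
    have g2 : m * s ≤ m * PF'.card := mul_le_mul_right hsq m
    have g3 : s ≤ m * s := by
      calc s = 1 * s := (one_mul s).symm
        _ ≤ m * s := mul_le_mul_left hm1 s
    have hexp : (m + 1) * (W.card + s) = m * W.card + m * s + W.card + s := by ring
    have hexp2 : (m + 1) * W.card = m * W.card + W.card := by ring
    linarith [h2, hexp, hexp2, g1, g2, g3]
end
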